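/- Let S be a set of n points in convex position in general position and let E be an injective mapping of path vertices v_1,...,v_n onto S whose straight-line drawing is planar. Then for every i with 1 < i < n, both the image of {v_1,...,v_{i−1}} and the image of {v_{i+1},...,v_n} are consecutive subsets of S along the convex hull. -/

import Mathlib

/-- Edge direction labels. -/
inductive Dir | U | D | L | R
deriving DecidableEq

/-- Opposite label: U↔D, L↔R. -/
def Dir.opp : Dir → Dir
  | .U => .D | .D => .U | .L => .R | .R => .L

/-- Label after counterclockwise rotation by π/2: U↦L, D↦R, R↦U, L↦D. -/
def Dir.rot : Dir → Dir
  | .U => .L | .D => .R | .R => .U | .L => .D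

/-- Label after vertical-line reflection: U↦U, D↦D, R↦L, L↦R. -/
def Dir.mir : Dir → Dir
  | .U => .U | .D => .D | .R => .L | .L => .R

/-- An edge from `a` to `b` is consistent with a direction label. -/
def dirOk : Dir → ℝ × ℝ → ℝ × ℝ → Prop
  | .U, a, b => a.2 < b.2
  | .D, a, b => b.2 < a.2
  | .R, a, b => a.1 < b.1
  | .L, a, b => b.1 < a.1

/-- The drawing of a path with edge labels `d` and vertex placement `E` is
direction-consistent. -/
def DirConsistent {m : ℕ} (d : Fin m → Dir) (E : Fin (m + 1) → ℝ × ℝ) : Prop :=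
  ∀ i : Fin m, dirOk (d i) (E i.castSucc) (E i.succ)

/-- The straight-line drawing of the path with vertex placement `E` is planar:
non-adjacent segments are disjoint; adjacent segments meet only at the shared endpoint. -/
def PlanarDrawing {m : ℕ} (E : Fin (m + 1) → ℝ × ℝ) : Prop :=
  (∀ i j : Fin m, (i : ℕ) + 1 < (j : ℕ) →
    segment ℝ (E i.castSucc) (E i.succ) ∩ segment ℝ (E j.castSucc) (E j.succ) = ∅) ∧
  (∀ i j : Fin m, (i : ℕ) + 1 = (j : ℕ) →
    segment ℝ (E i.castSucc) (E i.succ) ∩ segment ℝ (E j.castSucc) (E j.succ) = {E i.succ})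

/-- `E` is an embedding of the path vertices onto the point set `S`. -/
def EmbOn {m : ℕ} (E : Fin (m + 1) → ℝ × ℝ) (S : Set (ℝ × ℝ)) : Prop :=
  Function.Injective E ∧ Set.range E = S

/-- Planar direction-consistent embedding of the labeled path `d` on `S`. -/
def PDCE {m : ℕ} (d : Fin m → Dir) (E : Fin (m + 1) → ℝ × ℝ) (S : Set (ℝ × ℝ)) : Prop :=
  EmbOn E S ∧ DirConsistent d E ∧ PlanarDrawing E

/-- `S` is in convex position. -/
def ConvexPos (S : Set (ℝ × ℝ)) : Prop :=
  ConvexIndependent ℝ ((↑) : S → ℝ × ℝ)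

/-- No three distinct points of `S` are collinear. -/
def NoThreeCollinear (S : Set (ℝ × ℝ)) : Prop :=
  ∀ p ∈ S, ∀ q ∈ S, ∀ r ∈ S, p ≠ q → p ≠ r → q ≠ r →
    ¬ Collinear ℝ ({p, q, r} : Set (ℝ × ℝ))

/-- General position: no three collinear, no two points with equal x- or y-coordinate. -/
def GenPos (S : Set (ℝ × ℝ)) : Prop :=
  NoThreeCollinear S ∧ ∀ p ∈ S, ∀ q ∈ S, p ≠ q → p.1 ≠ q.1 ∧ p.2 ≠ q.2

def IsTopmost (S : Set (ℝ × ℝ)) (t : ℝ × ℝ) : Prop :=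
  t ∈ S ∧ ∀ p ∈ S, p ≠ t → p.2 < t.2
def IsBottommost (S : Set (ℝ × ℝ)) (b : ℝ × ℝ) : Prop :=
  b ∈ S ∧ ∀ p ∈ S, p ≠ b → b.2 < p.2
def IsLeftmost (S : Set (ℝ × ℝ)) (l : ℝ × ℝ) : Prop :=
  l ∈ S ∧ ∀ p ∈ S, p ≠ l → l.1 < p.1
def IsRightmost (S : Set (ℝ × ℝ)) (r : ℝ × ℝ) : Prop :=
  r ∈ S ∧ ∀ p ∈ S, p ≠ r → p.1 < r.1

/-- Cross product telling on which side of the directed line `a → b` the point `p` lies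
(`0 < cross a b p` means `p` is strictly to the left). -/
def cross (a b p : ℝ × ℝ) : ℝ :=
  (b.1 - a.1) * (p.2 - a.2) - (b.2 - a.2) * (p.1 - a.1)

/-- With `b` bottommost and `t` topmost, all other points lie strictly to the left of the
line through `b` and `t`. -/
def LeftSided (S : Set (ℝ × ℝ)) (b t : ℝ × ℝ) : Prop :=
  IsBottommost S b ∧ IsTopmost S t ∧ ∀ p ∈ S, p ≠ b → p ≠ t → 0 < cross b t p

/-- With `b` bottommost and `t` topmost, all other points lie strictly to the right of the
line through `b` and `t`. -/
def RightSided (S : Set (ℝ × ℝ)) (b t : ℝ × ℝ) : Prop :=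
  IsBottommost S b ∧ IsTopmost S t ∧ ∀ p ∈ S, p ≠ b → p ≠ t → cross b t p < 0

/-- Two points of `S` are consecutive on the convex hull of `S`: all other points of `S`
lie strictly on one side of the line through them. -/
def HullConsecutive (S : Set (ℝ × ℝ)) (p q : ℝ × ℝ) : Prop :=
  p ∈ S ∧ q ∈ S ∧ p ≠ q ∧
    ((∀ r ∈ S, r ≠ p → r ≠ q → 0 < cross p q r) ∨
     (∀ r ∈ S, r ≠ p → r ≠ q → cross p q r < 0))

/-- Strip-convex point set with bottommost `b`, leftmost `l`, topmost `t`, rightmost `r`: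
`b` and `l` coincide or are hull-consecutive, and so do `t` and `r`. -/
def StripConvex (S : Set (ℝ × ℝ)) (b l t r : ℝ × ℝ) : Prop :=
  IsBottommost S b ∧ IsLeftmost S l ∧ IsTopmost S t ∧ IsRightmost S r ∧
    (b = l ∨ HullConsecutive S b l) ∧ (t = r ∨ HullConsecutive S t r)

/-- `T` is a consecutive subset of the convex point set `S` along its hull:
it can be separated from `S \ T` by a line. -/
def Consecutive (S T : Set (ℝ × ℝ)) : Prop :=
  T ⊆ S ∧ ∃ f : (ℝ × ℝ) →ₗ[ℝ] ℝ, ∃ c : ℝ,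
    (∀ p ∈ T, c < f p) ∧ ∀ p ∈ S \ T, f p < c


section Aux

open Set

lemma cross_affine (a c x y : ℝ × ℝ) {s t : ℝ} (h : s + t = 1) :
    cross a c (s • x + t • y) = s * cross a c x + t * cross a c y := by
  have ht : t = 1 - s := by linarith
  subst ht
  simp only [cross, Prod.fst_add, Prod.snd_add, Prod.smul_fst, Prod.smul_snd, smul_eq_mul]
  ring

lemma exists_smul_of_cross {v w : ℝ × ℝ} (hv : v ≠ 0) (h : v.1 * w.2 - v.2 * w.1 = 0) :
    ∃ s : ℝ, w = s • v := by
  by_cases h1 : v.1 = 0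
  · have h2 : v.2 ≠ 0 := by
      intro h2; exact hv (Prod.ext h1 h2)
    refine ⟨w.2 / v.2, ?_⟩
    have hw1 : w.1 = 0 := by
      have : v.2 * w.1 = 0 := by rw [h1] at h; linarith
      rcases mul_eq_zero.mp this with h' | h'
      · exact absurd h' h2
      · exact h'
    apply Prod.ext <;> simp [Prod.smul_fst, Prod.smul_snd, h1, hw1]
    field_simp
  · refine ⟨w.1 / v.1, ?_⟩
    apply Prod.ext <;> simp [Prod.smul_fst, Prod.smul_snd]
    · field_simp
    · field_simp
      nlinarith [h]

lemma collinear_of_cross_eq_zero {p q r : ℝ × ℝ} (h : cross p q r = 0) :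
    Collinear ℝ ({p, q, r} : Set (ℝ × ℝ)) := by
  by_cases hpq : q = p
  · subst hpq
    have : ({q, q, r} : Set (ℝ × ℝ)) = {q, r} := by
      simp [Set.insert_comm, Set.insert_idem]
    rw [this]
    exact collinear_pair ℝ q r
  · have hv : q - p ≠ 0 := sub_ne_zero.mpr hpq
    have h' : (q - p).1 * (r - p).2 - (q - p).2 * (r - p).1 = 0 := by
      simpa [cross, Prod.fst_sub, Prod.snd_sub] using h
    obtain ⟨s, hs⟩ := exists_smul_of_cross hv h'
    rw [collinear_iff_of_mem (Set.mem_insert p {q, r})]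
    refine ⟨q - p, ?_⟩
    rintro x (rfl | rfl | rfl)
    · exact ⟨0, by simp⟩
    · exact ⟨1, by simp⟩
    · exact ⟨s, by rw [← hs]; simp⟩

lemma not_mem_hull {S : Set (ℝ × ℝ)} (cp : ConvexPos S) {p : ℝ × ℝ} (hp : p ∈ S)
    {t : Set (ℝ × ℝ)} (ht : t ⊆ S) (hpt : p ∉ t) : p ∉ convexHull ℝ t := by
  intro h
  refine (convexIndependent_set_iff_notMem_convexHull_diff.mp cp p hp) ?_
  refine convexHull_mono ?_ h
  intro x hx
  exact ⟨ht hx, fun hxp => hpt (by rwa [Set.mem_singleton_iff.mp hxp] at hx)⟩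

end Aux

section Exit

open Set

lemma exit_triangle (b : AffineBasis (Fin 3) ℝ (ℝ × ℝ)) (p q : ℝ × ℝ)
    (hq : q ∈ convexHull ℝ (Set.range b)) (hp : p ∉ convexHull ℝ (Set.range b)) :
    ∃ i j : Fin 3, i ≠ j ∧ (segment ℝ p q ∩ segment ℝ (b i) (b j)).Nonempty := by
  rw [b.convexHull_eq_nonneg_coord] at hq hp
  simp only [Set.mem_setOf_eq, not_forall, not_le] at hp hq
  obtain ⟨j0, hj0⟩ := hp
  set u : Fin 3 → ℝ := fun i => b.coord i q with hu
  set v : Fin 3 → ℝ := fun i => b.coord i p with hv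
  set tf : Fin 3 → ℝ := fun i => if v i < 0 then u i / (u i - v i) else 1 with htf
  obtain ⟨j, -, hjmin⟩ := Finset.exists_min_image Finset.univ tf ⟨j0, Finset.mem_univ j0⟩
  have htf_lt_one : ∀ i, v i < 0 → tf i < 1 := by
    intro i hi
    simp only [htf, if_pos hi]
    rw [div_lt_one (by linarith [hq i] : (0:ℝ) < u i - v i)]
    linarith
  have hvj : v j < 0 := by
    by_contra h
    have h1 : tf j = 1 := by simp only [htf]; rw [if_neg h]
    have h2 := hjmin j0 (Finset.mem_univ j0)
    rw [h1] at h2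
    linarith [htf_lt_one j0 hj0]
  have hdj : (0:ℝ) < u j - v j := by linarith [hq j]
  set τ : ℝ := u j / (u j - v j) with hτ
  have hτj : tf j = τ := by simp only [htf]; rw [if_pos hvj]
  have hτ0 : 0 ≤ τ := div_nonneg (hq j) (le_of_lt hdj)
  have hτ1 : τ < 1 := by rw [← hτj]; exact htf_lt_one j hvj
  set w : ℝ × ℝ := AffineMap.lineMap q p τ with hw
  have hcoord : ∀ i, b.coord i w = u i + τ * (v i - u i) := by
    intro i
    rw [hw, (b.coord i).apply_lineMap]
    rw [AffineMap.lineMap_apply]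
    simp [hu, hv]
    ring
  have hwnn : ∀ i, 0 ≤ b.coord i w := by
    intro i
    rw [hcoord i]
    by_cases hvi : v i < 0
    · have hti : τ ≤ u i / (u i - v i) := by
        have h2 := hjmin i (Finset.mem_univ i)
        rw [hτj] at h2
        simpa only [htf, if_pos hvi] using h2
      have hdi : (0:ℝ) < u i - v i := by linarith [hq i]
      have h3 : τ * (u i - v i) ≤ u i := by
        rw [← le_div_iff₀ hdi] at *
        exact hti
      nlinarith
    · push_neg at hvi
      nlinarith [hq i, hτ0, hτ1.le]
  have hwj : b.coord j w = 0 := by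
    rw [hcoord j, hτ]
    field_simp
    ring
  have hwseg : w ∈ segment ℝ p q := by
    rw [segment_symm, segment_eq_image_lineMap]
    exact ⟨τ, ⟨hτ0, hτ1.le⟩, rfl⟩
  obtain ⟨i1, i2, hne, himg⟩ := Finset.card_eq_two.mp
    (by rw [Finset.card_erase_of_mem (Finset.mem_univ j)]; simp :
      (Finset.univ.erase j).card = 2)
  refine ⟨i1, i2, hne, w, hwseg, ?_⟩
  have hsum : ∑ i ∈ Finset.univ.erase j, b.coord i w = 1 := by
    have h1 := b.sum_coord_apply_eq_one w
    rw [← Finset.add_sum_erase _ _ (Finset.mem_univ j), hwj] at h1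
    linarith
  have hwcomb : (Finset.univ.erase j).affineCombination ℝ b (fun i => b.coord i w) = w := by
    have hind : Set.indicator ↑(Finset.univ.erase j) (fun i => b.coord i w)
        = fun i => b.coord i w := by
      funext i
      by_cases hij : i = j
      · subst hij; simp [Set.indicator, hwj]
      · simp [Set.indicator_apply, Finset.mem_coe, hij]
    rw [Finset.affineCombination_indicator_subset (fun i => b.coord i w) b
      (Finset.subset_univ (Finset.univ.erase j)), hind]
    exact b.affineCombination_coord_eq_self w
  rw [← hwcomb, affineCombination_eq_centerMass hsum]
  apply (convex_segment (b i1) (b i2)).centerMass_mem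
  · intro i _; exact hwnn i
  · rw [hsum]; norm_num
  · intro i hi
    rw [himg] at hi
    rcases Finset.mem_insert.mp hi with rfl | hi2
    · exact left_mem_segment ℝ _ _
    · rw [Finset.mem_singleton.mp hi2]
      exact right_mem_segment ℝ _ _

end Exit

section Chords

open Set

lemma cross_eq_zero_left (a c : ℝ × ℝ) : cross a c a = 0 := by simp [cross]
lemma cross_eq_zero_right (a c : ℝ × ℝ) : cross a c c = 0 := by simp [cross]; ring

lemma cross_ne_zero {S : Set (ℝ × ℝ)} (no3 : NoThreeCollinear S) {a c p : ℝ × ℝ}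
    (ha : a ∈ S) (hc : c ∈ S) (hp : p ∈ S)
    (hac : a ≠ c) (hap : a ≠ p) (hcp : c ≠ p) : cross a c p ≠ 0 :=
  fun h => no3 a ha c hc p hp hac hap hcp (collinear_of_cross_eq_zero h)

lemma reduce {S T : Set (ℝ × ℝ)} (cp : ConvexPos S) (no3 : NoThreeCollinear S)
    (hT : T ⊆ S) {z p0 : ℝ × ℝ} (hz : z ∈ convexHull ℝ T) (hzT : z ∉ T)
    (hp0S : p0 ∈ S) (hp0T : p0 ∉ T) :
    ∃ a c, a ∈ T ∧ c ∈ T ∧ a ≠ c ∧ ∃ w, w ∈ segment ℝ a c ∧ w ∈ segment ℝ p0 z := by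
  rw [convexHull_eq_union] at hz
  simp only [Set.mem_iUnion] at hz
  obtain ⟨t, htT, hti, hzt⟩ := hz
  have hcard : t.card ≤ 3 := by
    have h1 := hti.card_le_finrank_succ
    have h2 : Module.finrank ℝ (vectorSpan ℝ (Set.range ((↑) : t → ℝ × ℝ)))
        ≤ Module.finrank ℝ (ℝ × ℝ) := Submodule.finrank_le _
    have h3 : Module.finrank ℝ (ℝ × ℝ) = 2 := by simp
    rw [Fintype.card_coe] at h1
    omega
  have hcases : t.card = 0 ∨ t.card = 1 ∨ t.card = 2 ∨ t.card = 3 := by omega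
  rcases hcases with hc0 | hc1 | hc2 | hc3
  · rw [Finset.card_eq_zero.mp hc0] at hzt
    simp at hzt
  · obtain ⟨x1, rfl⟩ := Finset.card_eq_one.mp hc1
    simp only [Finset.coe_singleton, convexHull_singleton, Set.mem_singleton_iff] at hzt
    exact absurd (htT (by simp [hzt])) hzT
  · obtain ⟨x1, x2, h12, rfl⟩ := Finset.card_eq_two.mp hc2
    simp only [Finset.coe_insert, Finset.coe_singleton, convexHull_pair] at hzt
    refine ⟨x1, x2, htT (by simp), htT (by simp), h12, z, hzt, right_mem_segment ℝ p0 z⟩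
  · obtain ⟨x1, x2, x3, h12, h13, h23, rfl⟩ := Finset.card_eq_three.mp hc3
    have hsub : ({x1, x2, x3} : Set (ℝ × ℝ)) ⊆ T := by
      have := htT
      intro p hp
      rcases hp with rfl | rfl | rfl <;> exact htT (by simp)
    have hx1 : x1 ∈ S := hT (hsub (by simp))
    have hx2 : x2 ∈ S := hT (hsub (by simp))
    have hx3 : x3 ∈ S := hT (hsub (by simp))
    have hind : AffineIndependent ℝ ![x1, x2, x3] :=
      affineIndependent_iff_not_collinear_set.mpr (no3 x1 hx1 x2 hx2 x3 hx3 h12 h13 h23)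
    have htot : affineSpan ℝ (Set.range ![x1, x2, x3]) = ⊤ := by
      rw [hind.affineSpan_eq_top_iff_card_eq_finrank_add_one]
      simp
    let b : AffineBasis (Fin 3) ℝ (ℝ × ℝ) := ⟨![x1, x2, x3], hind, htot⟩
    have hbrange : Set.range ⇑b = ({x1, x2, x3} : Set (ℝ × ℝ)) := by
      show Set.range ![x1, x2, x3] = _
      ext p
      simp [Matrix.range_cons, Matrix.range_empty]
      tauto
    have hq : z ∈ convexHull ℝ (Set.range ⇑b) := by
      rw [hbrange]
      simpa using hzt
    have hp : p0 ∉ convexHull ℝ (Set.range ⇑b) := by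
      rw [hbrange]
      refine not_mem_hull cp hp0S (fun p hp => hT (hsub hp)) (fun hmem => hp0T (hsub hmem))
    obtain ⟨i, j, hij, w, hw1, hw2⟩ := exit_triangle b p0 z hq hp
    have hbi : b i ∈ T := hsub (by rw [← hbrange]; exact ⟨i, rfl⟩)
    have hbj : b j ∈ T := hsub (by rw [← hbrange]; exact ⟨j, rfl⟩)
    exact ⟨b i, b j, hbi, hbj, fun h => hij (hind.injective h), w, hw2, hw1⟩

lemma crossing_chords {S A B : Set (ℝ × ℝ)} (cp : ConvexPos S) (no3 : NoThreeCollinear S)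
    (hA : A ⊆ S) (hB : B ⊆ S) (hAB : ∀ x ∈ A, x ∉ B)
    {z : ℝ × ℝ} (hzA : z ∈ convexHull ℝ A) (hzB : z ∈ convexHull ℝ B) :
    ∃ a c b1 b2, a ∈ A ∧ c ∈ A ∧ b1 ∈ B ∧ b2 ∈ B ∧ a ≠ c ∧ b1 ≠ b2 ∧
      (segment ℝ a c ∩ segment ℝ b1 b2).Nonempty := by
  obtain ⟨p0, hp0⟩ : B.Nonempty := by
    rcases B.eq_empty_or_nonempty with h | h
    · rw [h, convexHull_empty] at hzB; exact absurd hzB (Set.notMem_empty z)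
    · exact h
  have hzA' : z ∉ A := fun hzA2 => not_mem_hull cp (hA hzA2) hB (hAB z hzA2) hzB
  obtain ⟨a, c, haT, hcT, hac, w, hwac, hwseg⟩ :=
    reduce cp no3 hA hzA hzA' (hB hp0) (fun h => hAB p0 h hp0)
  have hwB : w ∈ convexHull ℝ B :=
    (convex_convexHull ℝ B).segment_subset (subset_convexHull ℝ B hp0) hzB hwseg
  have hwA : w ∈ convexHull ℝ A :=
    (convex_convexHull ℝ A).segment_subset (subset_convexHull ℝ A haT)
      (subset_convexHull ℝ A hcT) hwac
  have hwB' : w ∉ B := fun hw => not_mem_hull cp (hB hw) hA (fun h => hAB w h hw) hwA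
  obtain ⟨b1, b2, hb1, hb2, hb12, w', hw'b, hw'aw⟩ :=
    reduce cp no3 hB hwB hwB' (hA haT) (fun h => hAB a haT h)
  refine ⟨a, c, b1, b2, haT, hcT, hb1, hb2, hac, hb12, w', ?_, hw'b⟩
  exact (convex_segment a c).segment_subset (left_mem_segment ℝ a c) hwac hw'aw

end Chords

section Sides

open Set

lemma opposite_sides {S : Set (ℝ × ℝ)} (cp : ConvexPos S) (no3 : NoThreeCollinear S)
    {a c b d : ℝ × ℝ} (haS : a ∈ S) (hcS : c ∈ S) (hbS : b ∈ S) (hdS : d ∈ S)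
    (hac : a ≠ c) (hba : b ≠ a) (hbc : b ≠ c) (hda : d ≠ a) (hdc : d ≠ c)
    (h : (segment ℝ a c ∩ segment ℝ b d).Nonempty) :
    cross a c b * cross a c d < 0 := by
  obtain ⟨w, hw1, hw2⟩ := h
  obtain ⟨r, r', hr, hr', hrr, hw⟩ := hw1
  obtain ⟨s, t, hs, ht, hst, hw'⟩ := hw2
  have hcw : cross a c w = 0 := by
    rw [← hw, cross_affine a c a c hrr, cross_eq_zero_left, cross_eq_zero_right]
    ring
  have hXY : s * cross a c b + t * cross a c d = 0 := by
    rw [← cross_affine a c b d hst, hw', hcw]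
  have hX : cross a c b ≠ 0 := cross_ne_zero no3 haS hcS hbS hac hba.symm hbc.symm
  have hY : cross a c d ≠ 0 := cross_ne_zero no3 haS hcS hdS hac hda.symm hdc.symm
  have hacS : ({a, c} : Set (ℝ × ℝ)) ⊆ S := by rintro p (rfl | rfl); exacts [haS, hcS]
  rcases eq_or_lt_of_le hs with hs0 | hs0
  · exfalso
    have hwd : w = d := by
      rw [← hw', ← hs0, show t = 1 by linarith]
      simp
    refine not_mem_hull cp hdS hacS (by simp [hda, hdc]) ?_
    rw [convexHull_pair, ← hwd]
    exact ⟨r, r', hr, hr', hrr, hw⟩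
  · rcases eq_or_lt_of_le ht with ht0 | ht0
    · exfalso
      have hwb : w = b := by
        rw [← hw', ← ht0, show s = 1 by linarith]
        simp
      refine not_mem_hull cp hbS hacS (by simp [hba, hbc]) ?_
      rw [convexHull_pair, ← hwb]
      exact ⟨r, r', hr, hr', hrr, hw⟩
    · have hY2 : 0 < cross a c d ^ 2 :=
        lt_of_le_of_ne (sq_nonneg _) (Ne.symm (pow_ne_zero 2 hY))
      have key : s * (cross a c b * cross a c d) = -(t * cross a c d ^ 2) := by
        linear_combination (cross a c d) * hXY
      by_contra hcon
      push_neg at hcon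
      nlinarith [mul_nonneg hs0.le hcon, mul_pos ht0 hY2]

lemma crossing_of_opposite {S : Set (ℝ × ℝ)} (cp : ConvexPos S)
    {x y a c : ℝ × ℝ} (hxS : x ∈ S) (hyS : y ∈ S) (haS : a ∈ S) (hcS : c ∈ S)
    (hac : a ≠ c) (hax : a ≠ x) (hay : a ≠ y) (hcx : c ≠ x) (hcy : c ≠ y)
    (h : cross a c x * cross a c y < 0) :
    (segment ℝ x y ∩ segment ℝ a c).Nonempty := by
  set gx := cross a c x with hgx
  set gy := cross a c y with hgy
  have hd : gx - gy ≠ 0 := by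
    rcases mul_neg_iff.mp h with ⟨h1, h2⟩ | ⟨h1, h2⟩ <;> intro h0 <;> nlinarith
  set t : ℝ := gx / (gx - gy) with htdef
  have ht0 : 0 < t := by
    rcases mul_neg_iff.mp h with ⟨h1, h2⟩ | ⟨h1, h2⟩
    · exact div_pos h1 (by linarith)
    · exact div_pos_of_neg_of_neg h1 (by linarith)
  have ht1 : t < 1 := by
    rcases mul_neg_iff.mp h with ⟨h1, h2⟩ | ⟨h1, h2⟩
    · rw [htdef, div_lt_one (by linarith : (0:ℝ) < gx - gy)]; linarith
    · have hd2 : gy - gx ≠ 0 := fun h0 => hd (by linarith)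
      have h5 : t = (-gx) / (gy - gx) := by rw [htdef]; field_simp; ring
      rw [h5, div_lt_one (by linarith : (0:ℝ) < gy - gx)]; linarith
  set z : ℝ × ℝ := (1 - t) • x + t • y with hzdef
  have hz_seg : z ∈ segment ℝ x y := ⟨1 - t, t, by linarith, ht0.le, by ring, rfl⟩
  have hz0 : cross a c z = 0 := by
    rw [hzdef, cross_affine a c x y (by ring), ← hgx, ← hgy, htdef]
    field_simp
    ring
  have hv : c - a ≠ 0 := sub_ne_zero.mpr (Ne.symm hac)
  have hcross' : (c - a).1 * (z - a).2 - (c - a).2 * (z - a).1 = 0 := by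
    simpa [cross, Prod.fst_sub, Prod.snd_sub] using hz0
  obtain ⟨s, hsz⟩ := exists_smul_of_cross hv hcross'
  have hzs : z = a + s • (c - a) := by rw [← hsz]; abel
  have hxyS : ∀ p, p = a ∨ p = x ∨ p = y → p ∈ S := by rintro p (rfl | rfl | rfl); exacts [haS, hxS, hyS]
  have hcxyS : ∀ p, p = c ∨ p = x ∨ p = y → p ∈ S := by rintro p (rfl | rfl | rfl); exacts [hcS, hxS, hyS]
  rcases le_or_gt 0 s with hs0 | hs0
  · rcases le_or_gt s 1 with hs1 | hs1
    · refine ⟨z, hz_seg, (1 - s), s, by linarith, hs0, by ring, ?_⟩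
      rw [hzs]
      module
    · exfalso
      have hsne : s ≠ 0 := by linarith
      have hkey : ((s - 1) / s) • a + (1 / s) • (a + s • (c - a)) = c := by
        match_scalars <;> (field_simp; try ring)
      have hzmem : (a + s • (c - a)) ∈ convexHull ℝ ({a, x, y} : Set (ℝ × ℝ)) := by
        rw [← hzs]
        exact (convex_convexHull ℝ _).segment_subset
          (subset_convexHull ℝ _ (by simp)) (subset_convexHull ℝ _ (by simp)) hz_seg
      have hcmem : c ∈ convexHull ℝ ({a, x, y} : Set (ℝ × ℝ)) := by
        rw [← hkey]
        exact (convex_convexHull ℝ _) (subset_convexHull ℝ _ (by simp)) hzmem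
          (div_nonneg (by linarith) (by linarith)) (div_nonneg zero_le_one (by linarith))
          (by field_simp; ring)
      refine not_mem_hull cp hcS (fun p hp => hxyS p hp) ?_ hcmem
      intro hmem
      rcases hmem with h9 | h9 | h9
      exacts [hac h9.symm, hcx h9, hcy h9]
  · exfalso
    have hsne : (1:ℝ) - s ≠ 0 := by linarith
    have hkey : (1 / (1 - s)) • (a + s • (c - a)) + (-s / (1 - s)) • c = a := by
      match_scalars <;> (field_simp; try ring)
    have hzmem : (a + s • (c - a)) ∈ convexHull ℝ ({c, x, y} : Set (ℝ × ℝ)) := by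
      rw [← hzs]
      exact (convex_convexHull ℝ _).segment_subset
        (subset_convexHull ℝ _ (by simp)) (subset_convexHull ℝ _ (by simp)) hz_seg
    have hamem : a ∈ convexHull ℝ ({c, x, y} : Set (ℝ × ℝ)) := by
      rw [← hkey]
      refine (convex_convexHull ℝ _) hzmem (subset_convexHull ℝ _ (by simp))
        (div_nonneg zero_le_one (by linarith)) ?_ (by field_simp; ring)
      · rw [neg_div]
        have h9 : s / (1 - s) ≤ 0 := div_nonpos_of_nonpos_of_nonneg hs0.le (by linarith)
        linarith
    refine not_mem_hull cp haS (fun p hp => hcxyS p hp) ?_ hamem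
    intro hmem
    rcases hmem with h9 | h9 | h9
    exacts [hac h9, hax h9, hay h9]

lemma sign_change_aux (g : ℕ → ℝ) : ∀ (n j0 : ℕ), g j0 < 0 → 0 < g (j0 + n) →
    (∀ j, j0 ≤ j → j ≤ j0 + n → g j ≠ 0) →
    ∃ l, j0 ≤ l ∧ l + 1 ≤ j0 + n ∧ g l * g (l + 1) < 0 := by
  intro n
  induction n with
  | zero => intro j0 h1 h2 _; simp at h2; linarith
  | succ n ih =>
    intro j0 h1 h2 hne
    rcases lt_trichotomy (g (j0 + n)) 0 with hn | hn | hn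
    · refine ⟨j0 + n, Nat.le_add_right _ _, by omega, ?_⟩
      have : g (j0 + n + 1) = g (j0 + (n + 1)) := by ring_nf
      rw [show j0 + n + 1 = j0 + (n + 1) by omega]
      exact mul_neg_of_neg_of_pos hn h2
    · exact absurd hn (hne (j0 + n) (by omega) (by omega))
    · obtain ⟨l, hl1, hl2, hl3⟩ := ih j0 h1 hn (fun j hj1 hj2 => hne j hj1 (by omega))
      exact ⟨l, hl1, by omega, hl3⟩

lemma sign_change (g : ℕ → ℝ) (lo hi j0 j1 : ℕ)
    (hj0 : lo ≤ j0) (hj0' : j0 ≤ hi) (hj1 : lo ≤ j1) (hj1' : j1 ≤ hi)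
    (hne : ∀ j, lo ≤ j → j ≤ hi → g j ≠ 0) (h : g j0 * g j1 < 0) :
    ∃ l, lo ≤ l ∧ l + 1 ≤ hi ∧ g l * g (l + 1) < 0 := by
  rcases mul_neg_iff.mp h with ⟨h1, h2⟩ | ⟨h1, h2⟩
  · -- g j0 > 0, g j1 < 0
    rcases le_or_gt j0 j1 with hle | hlt
    · obtain ⟨l, hl1, hl2, hl3⟩ := sign_change_aux (fun n => -g n) (j1 - j0) j0
        (by simpa using h1) (by rw [show j0 + (j1 - j0) = j1 by omega]; simpa using h2)
        (fun j ha hb => by simpa using hne j (by omega) (by omega))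
      refine ⟨l, by omega, by omega, ?_⟩
      have := hl3
      simp only [neg_mul_neg] at this
      exact this
    · obtain ⟨l, hl1, hl2, hl3⟩ := sign_change_aux g (j0 - j1) j1 h2
        (by rw [show j1 + (j0 - j1) = j0 by omega]; exact h1)
        (fun j ha hb => hne j (by omega) (by omega))
      exact ⟨l, by omega, by omega, hl3⟩
  · -- g j0 < 0, g j1 > 0
    rcases le_or_gt j0 j1 with hle | hlt
    · obtain ⟨l, hl1, hl2, hl3⟩ := sign_change_aux g (j1 - j0) j0 h1
        (by rw [show j0 + (j1 - j0) = j1 by omega]; exact h2)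
        (fun j ha hb => hne j (by omega) (by omega))
      exact ⟨l, by omega, by omega, hl3⟩
    · obtain ⟨l, hl1, hl2, hl3⟩ := sign_change_aux (fun n => -g n) (j0 - j1) j1
        (by simpa using h2) (by rw [show j1 + (j0 - j1) = j0 by omega]; simpa using h1)
        (fun j ha hb => by simpa using hne j (by omega) (by omega))
      refine ⟨l, by omega, by omega, ?_⟩
      have := hl3
      simp only [neg_mul_neg] at this
      exact this

end Sides

section Main

open Set

open Fin.NatCast in
lemma hulls_disjoint {m : ℕ} (E : Fin (m + 1) → ℝ × ℝ) (S : Set (ℝ × ℝ))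
    (hconv : ConvexPos S) (hgen : GenPos S) (hE : EmbOn E S) (hplanar : PlanarDrawing E)
    (k : ℕ) :
    convexHull ℝ (E '' {j : Fin (m + 1) | (j : ℕ) ≤ k}) ∩
      convexHull ℝ (E '' {j : Fin (m + 1) | k < (j : ℕ)}) = ∅ := by
  by_contra hne
  obtain ⟨z, hzA, hzB⟩ := Set.nonempty_iff_ne_empty.mpr hne
  obtain ⟨hinj, hrange⟩ := hE
  obtain ⟨no3, -⟩ := hgen
  set A := E '' {j : Fin (m + 1) | (j : ℕ) ≤ k} with hAdef
  set B := E '' {j : Fin (m + 1) | k < (j : ℕ)} with hBdef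
  have hA : A ⊆ S := by rw [← hrange]; exact Set.image_subset_range E _
  have hB : B ⊆ S := by rw [← hrange]; exact Set.image_subset_range E _
  have hAB : ∀ x ∈ A, x ∉ B := by
    rintro x ⟨j1, hj1, rfl⟩ ⟨j2, hj2, hEq⟩
    simp only [Set.mem_setOf_eq] at hj1 hj2
    have h9 := hinj hEq
    rw [h9] at hj2
    omega
  have hneAB : ∀ p ∈ A, ∀ q ∈ B, p ≠ q := fun p hp q hq h9 => hAB p hp (h9 ▸ hq)
  obtain ⟨a, c, b1, b2, haA0, hcA0, hb1B0, hb2B0, hac, hb12, hcross1⟩ :=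
    crossing_chords hconv no3 hA hB hAB hzA hzB
  obtain ⟨ja, hja, rfl⟩ := haA0
  obtain ⟨jc, hjc, rfl⟩ := hcA0
  obtain ⟨jb1, hjb1, rfl⟩ := hb1B0
  obtain ⟨jb2, hjb2, rfl⟩ := hb2B0
  simp only [Set.mem_setOf_eq] at hja hjc hjb1 hjb2
  have haA : E ja ∈ A := ⟨ja, by simp only [Set.mem_setOf_eq]; omega, rfl⟩
  have hcA : E jc ∈ A := ⟨jc, by simp only [Set.mem_setOf_eq]; omega, rfl⟩
  have hb1B : E jb1 ∈ B := ⟨jb1, by simp only [Set.mem_setOf_eq]; omega, rfl⟩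
  have hb2B : E jb2 ∈ B := ⟨jb2, by simp only [Set.mem_setOf_eq]; omega, rfl⟩
  have hside1 : cross (E ja) (E jc) (E jb1) * cross (E ja) (E jc) (E jb2) < 0 :=
    opposite_sides hconv no3 (hA haA) (hA hcA) (hB hb1B) (hB hb2B) hac
      (hneAB _ haA _ hb1B).symm (hneAB _ hcA _ hb1B).symm
      (hneAB _ haA _ hb2B).symm (hneAB _ hcA _ hb2B).symm hcross1
  have hkm : k < m := by have := jb1.isLt; omega
  have hval : ∀ n : ℕ, n ≤ m → ((n : Fin (m + 1)) : ℕ) = n :=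
    fun n hn => Fin.val_cast_of_lt (by omega)
  have hmemB : ∀ n : ℕ, k + 1 ≤ n → n ≤ m → E (n : Fin (m + 1)) ∈ B := by
    intro n h1 h2
    exact ⟨(n : Fin (m + 1)), by simp only [Set.mem_setOf_eq, hval n h2]; omega, rfl⟩
  have hmemA : ∀ n : ℕ, n ≤ k → E (n : Fin (m + 1)) ∈ A := by
    intro n h1
    exact ⟨(n : Fin (m + 1)), by simp only [Set.mem_setOf_eq, hval n (by omega)]; omega, rfl⟩
  set g1 : ℕ → ℝ := fun n => cross (E ja) (E jc) (E (n : Fin (m + 1))) with hg1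
  have hne1 : ∀ n, k + 1 ≤ n → n ≤ m → g1 n ≠ 0 := by
    intro n h1 h2
    have hmem := hmemB n h1 h2
    exact cross_ne_zero no3 (hA haA) (hA hcA) (hB hmem) hac
      (hneAB _ haA _ hmem) (hneAB _ hcA _ hmem)
  obtain ⟨l, hl1, hl2, hl3⟩ := sign_change g1 (k + 1) m jb1.val jb2.val
    (by omega) (by omega) (by omega) (by omega) hne1
    (by simp only [hg1, Fin.cast_val_eq_self]; exact hside1)
  set x := E ((l : ℕ) : Fin (m + 1)) with hx
  set y := E ((l + 1 : ℕ) : Fin (m + 1)) with hy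
  have hxB : x ∈ B := hmemB l (by omega) (by omega)
  have hyB : y ∈ B := hmemB (l + 1) (by omega) (by omega)
  have hxy : x ≠ y := by
    intro h9
    have h11 : ((l : ℕ) : Fin (m + 1)) = ((l + 1 : ℕ) : Fin (m + 1)) := hinj h9
    have h12 := congrArg Fin.val h11
    rw [hval l (by omega), hval (l + 1) (by omega)] at h12
    omega
  have hl3' : cross (E ja) (E jc) x * cross (E ja) (E jc) y < 0 := hl3
  have hcross2 : (segment ℝ x y ∩ segment ℝ (E ja) (E jc)).Nonempty :=
    crossing_of_opposite hconv (hB hxB) (hB hyB) (hA haA) (hA hcA) hac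
      (hneAB _ haA _ hxB) (hneAB _ haA _ hyB) (hneAB _ hcA _ hxB) (hneAB _ hcA _ hyB) hl3'
  have hside2 : cross x y (E ja) * cross x y (E jc) < 0 :=
    opposite_sides hconv no3 (hB hxB) (hB hyB) (hA haA) (hA hcA) hxy
      (hneAB _ haA _ hxB) (hneAB _ haA _ hyB) (hneAB _ hcA _ hxB) (hneAB _ hcA _ hyB) hcross2
  set g2 : ℕ → ℝ := fun n => cross x y (E (n : Fin (m + 1))) with hg2
  have hne2 : ∀ n, 0 ≤ n → n ≤ k → g2 n ≠ 0 := by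
    intro n _ h2
    have hmem := hmemA n h2
    exact cross_ne_zero no3 (hB hxB) (hB hyB) (hA hmem) hxy
      (hneAB _ hmem _ hxB).symm (hneAB _ hmem _ hyB).symm
  obtain ⟨l', hl'1, hl'2, hl'3⟩ := sign_change g2 0 k ja.val jc.val
    (by omega) (by omega) (by omega) (by omega) hne2
    (by simp only [hg2, Fin.cast_val_eq_self]; exact hside2)
  have hmA1 := hmemA l' (by omega)
  have hmA2 := hmemA (l' + 1) (by omega)
  have hl'3' : cross x y (E ((l' : ℕ) : Fin (m + 1))) *
      cross x y (E ((l' + 1 : ℕ) : Fin (m + 1))) < 0 := hl'3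
  have hcross3 : (segment ℝ (E ((l' : ℕ) : Fin (m + 1))) (E ((l' + 1 : ℕ) : Fin (m + 1))) ∩
      segment ℝ x y).Nonempty :=
    crossing_of_opposite hconv (hA hmA1) (hA hmA2) (hB hxB) (hB hyB) hxy
      (hneAB _ hmA1 _ hxB).symm (hneAB _ hmA2 _ hxB).symm
      (hneAB _ hmA1 _ hyB).symm (hneAB _ hmA2 _ hyB).symm hl'3'
  have hi1lt : l' < m := by omega
  have hi2lt : l < m := by omega
  have hempty := hplanar.1 ⟨l', hi1lt⟩ ⟨l, hi2lt⟩ (by show l' + 1 < l; omega)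
  have e1 : (⟨l', hi1lt⟩ : Fin m).castSucc = ((l' : ℕ) : Fin (m + 1)) := by
    apply Fin.ext; show l' = _; exact (hval l' (by omega)).symm
  have e2 : (⟨l', hi1lt⟩ : Fin m).succ = ((l' + 1 : ℕ) : Fin (m + 1)) := by
    apply Fin.ext; show l' + 1 = _; exact (hval (l' + 1) (by omega)).symm
  have e3 : (⟨l, hi2lt⟩ : Fin m).castSucc = ((l : ℕ) : Fin (m + 1)) := by
    apply Fin.ext; show l = _; exact (hval l (by omega)).symm
  have e4 : (⟨l, hi2lt⟩ : Fin m).succ = ((l + 1 : ℕ) : Fin (m + 1)) := by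
    apply Fin.ext; show l + 1 = _; exact (hval (l + 1) (by omega)).symm
  rw [e1, e2, e3, e4, ← hx, ← hy] at hempty
  exact hcross3.ne_empty hempty

lemma sep_line {m : ℕ} (E : Fin (m + 1) → ℝ × ℝ) (S : Set (ℝ × ℝ))
    (hconv : ConvexPos S) (hgen : GenPos S) (hE : EmbOn E S) (hplanar : PlanarDrawing E)
    (k : ℕ) :
    ∃ f : (ℝ × ℝ) →ₗ[ℝ] ℝ, ∃ c : ℝ,
      (∀ p ∈ E '' {j : Fin (m + 1) | (j : ℕ) ≤ k}, c < f p) ∧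
      (∀ p ∈ E '' {j : Fin (m + 1) | k < (j : ℕ)}, f p < c) := by
  have hdisj := hulls_disjoint E S hconv hgen hE hplanar k
  have hAfin : (E '' {j : Fin (m + 1) | (j : ℕ) ≤ k}).Finite := (Set.toFinite _).image E
  have hBfin : (E '' {j : Fin (m + 1) | k < (j : ℕ)}).Finite := (Set.toFinite _).image E
  obtain ⟨f, u, v, hfu, huv, hfv⟩ := geometric_hahn_banach_compact_closed
    (convex_convexHull ℝ _) (hAfin.isCompact_convexHull ℝ)
    (convex_convexHull ℝ _) (hBfin.isClosed_convexHull ℝ)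
    (Set.disjoint_iff_inter_eq_empty.mpr hdisj)
  refine ⟨-f.toLinearMap, -(u + v) / 2, ?_, ?_⟩
  · intro p hp
    have h9 := hfu p (subset_convexHull ℝ _ hp)
    simp only [LinearMap.neg_apply, ContinuousLinearMap.coe_coe]
    linarith
  · intro p hp
    have h9 := hfv p (subset_convexHull ℝ _ hp)
    simp only [LinearMap.neg_apply, ContinuousLinearMap.coe_coe]
    linarith

end Main

/-- in a planar embedding of a path on a convex point set, for every
vertex `v_i` (1 < i < n), the images of `v_1,…,v_{i-1}` and of `v_{i+1},…,v_n` are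
consecutive subsets of `S`. -/
theorem planar_prefix_suffix_consecutive {m : ℕ} (E : Fin (m + 1) → ℝ × ℝ)
    (S : Set (ℝ × ℝ)) (hconv : ConvexPos S) (hgen : GenPos S)
    (hE : EmbOn E S) (hplanar : PlanarDrawing E) :
    ∀ i : ℕ, 1 < i → i < m + 1 →
      Consecutive S (E '' {j : Fin (m + 1) | (j : ℕ) < i - 1}) ∧
      Consecutive S (E '' {j : Fin (m + 1) | i ≤ (j : ℕ)}) := by
  intro i hi1 hi2
  have hinj := hE.1
  have hrange := hE.2
  constructor
  · obtain ⟨f, c0, h1, h2⟩ := sep_line E S hconv hgen hE hplanar (i - 2)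
    refine ⟨?_, f, c0, ?_, ?_⟩
    · intro p hp; rw [← hrange]; exact Set.image_subset_range E _ hp
    · intro p hp
      apply h1
      obtain ⟨j, hj, rfl⟩ := hp
      simp only [Set.mem_setOf_eq] at hj
      exact ⟨j, by simp only [Set.mem_setOf_eq]; omega, rfl⟩
    · intro p hp
      obtain ⟨hpS, hpT⟩ := hp
      apply h2
      rw [← hrange] at hpS
      obtain ⟨j, rfl⟩ := hpS
      refine ⟨j, ?_, rfl⟩
      simp only [Set.mem_setOf_eq]
      by_contra h9
      push_neg at h9
      exact hpT ⟨j, by simp only [Set.mem_setOf_eq]; omega, rfl⟩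
  · obtain ⟨f, c0, h1, h2⟩ := sep_line E S hconv hgen hE hplanar (i - 1)
    refine ⟨?_, -f, -c0, ?_, ?_⟩
    · intro p hp; rw [← hrange]; exact Set.image_subset_range E _ hp
    · intro p hp
      obtain ⟨j, hj, rfl⟩ := hp
      simp only [Set.mem_setOf_eq] at hj
      have h9 := h2 (E j) ⟨j, by simp only [Set.mem_setOf_eq]; omega, rfl⟩
      simp only [LinearMap.neg_apply]
      linarith
    · intro p hp
      obtain ⟨hpS, hpT⟩ := hp
      rw [← hrange] at hpS
      obtain ⟨j, rfl⟩ := hpS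
      have hjle : (j : ℕ) ≤ i - 1 := by
        by_contra h9
        push_neg at h9
        exact hpT ⟨j, by simp only [Set.mem_setOf_eq]; omega, rfl⟩
      have h9 := h1 (E j) ⟨j, by simp only [Set.mem_setOf_eq]; omega, rfl⟩
      simp only [LinearMap.neg_apply]
      linarith
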